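/- arXiv:2009.11216 — 3 statements merged into one kernel-verified Lean document; each statement's English description precedes it below -/
import Mathlib

section
/- For every a = (a₁, a₂) ∈ S: (1) h(ẑ(a)) = ∇₂g(a) · a₂ − g(a); and (2) g is differentiable with respect to its first argument at a, with partial gradient ∇₁g(a) = −∇₁h(ẑ(a)). -/
set_option maxHeartbeats 1000000

open Matrix Set

/-- For every `a = (a₁,a₂) ∈ S`:
(1) `h(ẑ(a)) = ∇₂g(a) · a₂ − g(a)`, where `ẑ(a) = (a₁, ∇₂g(a))`;
(2) `g` is differentiable with respect to its first argument at `a` with partial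
gradient `∇₁g(a) = −∇₁h(ẑ(a))`. -/
theorem stmt5 {n₁ n₂ : ℕ} (hn₁ : 0 < n₁) (hn₂ : 0 < n₂)
    (S₁ : Set (Fin n₁ → ℝ)) (S₂ : Set (Fin n₂ → ℝ))
    (hS₁o : IsOpen S₁) (hS₁c : Convex ℝ S₁) (hS₂o : IsOpen S₂) (hS₂c : Convex ℝ S₂)
    (h g : (Fin n₁ → ℝ) × (Fin n₂ → ℝ) → ℝ)
    (h1 : (Fin n₁ → ℝ) × (Fin n₂ → ℝ) → (Fin n₁ → ℝ))
    (h2 g2 : (Fin n₁ → ℝ) × (Fin n₂ → ℝ) → (Fin n₂ → ℝ))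
    (hconv : ∀ z₁ ∈ S₁, StrictConvexOn ℝ S₂ fun z₂ => h (z₁, z₂))
    -- (iii) `h` is continuously differentiable on `S` jointly in both arguments
    (hjoint : ContDiffOn ℝ 1 h (S₁ ×ˢ S₂))
    (hh1 : ∀ z ∈ S₁ ×ˢ S₂, ∀ v : Fin n₁ → ℝ,
      HasDerivAt (fun s : ℝ => h (z.1 + s • v, z.2)) (h1 z ⬝ᵥ v) 0)
    (hh2 : ∀ z ∈ S₁ ×ˢ S₂, ∀ v : Fin n₂ → ℝ,
      HasDerivAt (fun s : ℝ => h (z.1, z.2 + s • v)) (h2 z ⬝ᵥ v) 0)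
    (hg : ∀ a₁ ∈ S₁, ∀ a₂ ∈ S₂,
      IsGreatest {y : ℝ | ∃ z₂ ∈ S₂, y = a₂ ⬝ᵥ z₂ - h (a₁, z₂)} (g (a₁, a₂)))
    (hg2 : ∀ a ∈ S₁ ×ˢ S₂, ∀ v : Fin n₂ → ℝ,
      HasDerivAt (fun s : ℝ => g (a.1, a.2 + s • v)) (g2 a ⬝ᵥ v) 0)
    (hzS : ∀ a ∈ S₁ ×ˢ S₂, ((a.1 : Fin n₁ → ℝ), g2 a) ∈ S₁ ×ˢ S₂) :
    ∀ a ∈ S₁ ×ˢ S₂,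
      h (a.1, g2 a) = g2 a ⬝ᵥ a.2 - g a ∧
      ∀ v : Fin n₁ → ℝ,
        HasDerivAt (fun s : ℝ => g (a.1 + s • v, a.2)) ((-(h1 (a.1, g2 a))) ⬝ᵥ v) 0 := by
  haveI : Nonempty (Fin n₂) := ⟨⟨0, hn₂⟩⟩
  have hSo : IsOpen (S₁ ×ˢ S₂) := hS₁o.prod hS₂o
  have key : ∀ b₁ ∈ S₁, ∀ b₂ ∈ S₂, g2 (b₁, b₂) ∈ S₂ ∧
      g (b₁, b₂) = b₂ ⬝ᵥ g2 (b₁, b₂) - h (b₁, g2 (b₁, b₂)) := by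
    intro b₁ hb₁ b₂ hb₂
    obtain ⟨⟨w, hwS, hweq⟩, hub⟩ := hg b₁ hb₁ b₂ hb₂
    have hgw : g2 (b₁, b₂) = w := by
      have hcomp : ∀ v : Fin n₂ → ℝ, g2 (b₁, b₂) ⬝ᵥ v = v ⬝ᵥ w := by
        intro v
        have hc : Continuous fun s : ℝ => b₂ + s • v := by continuity
        have hmem : ∀ᶠ s : ℝ in nhds 0, b₂ + s • v ∈ S₂ := by
          have h0 : b₂ + (0:ℝ) • v = b₂ := by simp
          have := hc.continuousAt (x := (0:ℝ))
          exact this.eventually_mem (by rw [h0]; exact hS₂o.mem_nhds hb₂)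
        have hmin : IsLocalMin (fun s : ℝ => g (b₁, b₂ + s • v) - (b₂ ⬝ᵥ w + s * (v ⬝ᵥ w))) 0 := by
          filter_upwards [hmem] with s hs
          have hle : (b₂ + s • v) ⬝ᵥ w - h (b₁, w) ≤ g (b₁, b₂ + s • v) :=
            (hg b₁ hb₁ (b₂ + s • v) hs).2 ⟨w, hwS, rfl⟩
          have hdot : (b₂ + s • v) ⬝ᵥ w = b₂ ⬝ᵥ w + s * (v ⬝ᵥ w) := by
            simp [add_dotProduct, smul_dotProduct, smul_eq_mul]
          simp only [zero_smul, add_zero, zero_mul]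
          rw [hweq]
          linarith
        have hd : HasDerivAt (fun s : ℝ => g (b₁, b₂ + s • v) - (b₂ ⬝ᵥ w + s * (v ⬝ᵥ w)))
            (g2 (b₁, b₂) ⬝ᵥ v - v ⬝ᵥ w) 0 :=
          (hg2 (b₁, b₂) ⟨hb₁, hb₂⟩ v).sub ((hasDerivAt_mul_const _).const_add _)
        have := hmin.hasDerivAt_eq_zero hd
        linarith
      funext i
      have := hcomp (Pi.single i 1)
      simpa [dotProduct_single, single_dotProduct] using this
    rw [hgw]
    exact ⟨hwS, hweq⟩
  have hid : ∀ z ∈ S₁ ×ˢ S₂, ∀ v : Fin n₁ → ℝ, fderiv ℝ h z ((v, 0)) = h1 z ⬝ᵥ v := by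
    intro z hz v
    have hdAt : DifferentiableAt ℝ h z :=
      ((hjoint.differentiableOn one_ne_zero) z hz).differentiableAt (hSo.mem_nhds hz)
    have hγ : HasDerivAt (fun s : ℝ => (z.1 + s • v, z.2)) ((v, (0 : Fin n₂ → ℝ))) 0 := by
      have hb : HasDerivAt (fun s : ℝ => z.1 + s • v) v 0 := by
        simpa using ((hasDerivAt_id (0:ℝ)).smul_const v).const_add z.1
      exact hb.prodMk (hasDerivAt_const _ _)
    have hF : HasFDerivAt h (fderiv ℝ h z) (z.1 + (0:ℝ) • v, z.2) := by
      have e : (z.1 + (0:ℝ) • v, z.2) = z := by simp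
      rw [e]; exact hdAt.hasFDerivAt
    have hcomp := hF.comp_hasDerivAt 0 hγ
    exact (hcomp.unique (hh1 z hz v)).symm ▸ rfl
  rintro ⟨a₁, a₂⟩ ⟨ha₁, ha₂⟩
  obtain ⟨hg2S, hkeyeq⟩ := key a₁ ha₁ a₂ ha₂
  constructor
  · show h (a₁, g2 (a₁, a₂)) = g2 (a₁, a₂) ⬝ᵥ a₂ - g (a₁, a₂)
    rw [dotProduct_comm]
    linarith [hkeyeq]
  · intro v
    show HasDerivAt (fun s : ℝ => g (a₁ + s • v, a₂)) ((-(h1 (a₁, g2 (a₁, a₂)))) ⬝ᵥ v) 0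
    rw [neg_dotProduct]
    have hWtend : Filter.Tendsto (fun s : ℝ => g2 (a₁ + s • v, a₂)) (nhds 0)
        (nhds (g2 (a₁, a₂))) := by
      obtain ⟨hw₀S, hkey0⟩ := key a₁ ha₁ a₂ ha₂
      set w₀ := g2 (a₁, a₂) with hw₀
      -- the interval of valid s
      have hc1 : Continuous fun s : ℝ => a₁ + s • v := by continuity
      have hI : {s : ℝ | a₁ + s • v ∈ S₁} ∈ nhds (0:ℝ) := by
        have h0 : a₁ + (0:ℝ) • v = a₁ := by simp
        exact hc1.continuousAt.eventually_mem (by rw [h0]; exact hS₁o.mem_nhds ha₁)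
      obtain ⟨c, hcpos, hcball⟩ := Metric.mem_nhds_iff.1 hI
      set c' := c / 2 with hc'
      have hc'pos : (0:ℝ) < c' := by positivity
      have hc'I : ∀ s : ℝ, |s| ≤ c' → a₁ + s • v ∈ S₁ := by
        intro s hs
        apply hcball
        simp only [Metric.mem_ball, Real.dist_eq, sub_zero]
        calc |s| ≤ c / 2 := hs
          _ < c := by linarith
      rw [Metric.tendsto_nhds]
      intro ε hε
      -- radius r with closed ball inside S₂ and r < ε
      obtain ⟨r₀, hr₀pos, hr₀⟩ := Metric.isOpen_iff.1 hS₂o w₀ hw₀S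
      set r := min (ε / 2) (r₀ / 2) with hrdef
      have hrpos : (0:ℝ) < r := lt_min (by positivity) (by positivity)
      have hball : Metric.closedBall w₀ r ⊆ S₂ := by
        refine subset_trans ?_ hr₀
        intro u hu
        simp only [Metric.mem_closedBall] at hu
        simp only [Metric.mem_ball]
        calc dist u w₀ ≤ r := hu
          _ ≤ r₀ / 2 := min_le_right _ _
          _ < r₀ := by linarith
      -- φ₀ and its max on the sphere
      set φ₀ : (Fin n₂ → ℝ) → ℝ := fun u => a₂ ⬝ᵥ u - h (a₁, u) with hφ₀
      have hφ₀cont : ContinuousOn φ₀ S₂ := by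
        apply ContinuousOn.sub
        · exact (continuous_const.dotProduct continuous_id).continuousOn
        · exact hjoint.continuousOn.comp (by fun_prop) (fun u hu => ⟨ha₁, hu⟩)
      set K := Metric.sphere w₀ r with hK
      have hKS : K ⊆ S₂ := fun u hu => hball (Metric.sphere_subset_closedBall hu)
      have hKne : K.Nonempty := NormedSpace.sphere_nonempty.2 hrpos.le
      obtain ⟨u₀, hu₀K, hu₀max⟩ := (isCompact_sphere w₀ r).exists_isMaxOn hKne (hφ₀cont.mono hKS)
      have hu₀S : u₀ ∈ S₂ := hKS hu₀K
      -- φ₀ u ≤ g(a₁,a₂) for u ∈ S₂, with value attained at w₀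
      have hup : ∀ u ∈ S₂, φ₀ u ≤ g (a₁, a₂) := fun u hu => (hg a₁ ha₁ a₂ ha₂).2 ⟨u, hu, rfl⟩
      have hw₀val : φ₀ w₀ = g (a₁, a₂) := by simp only [hφ₀]; linarith [hkey0]
      -- strict gap on sphere
      have hu₀ne : u₀ ≠ w₀ := by
        intro hcontra
        have := hu₀K
        rw [hcontra] at this
        simp only [Metric.mem_sphere, dist_self] at this
        exact hrpos.ne this
      have hgap : φ₀ u₀ < φ₀ w₀ := by
        rcases lt_or_eq_of_le (hup u₀ hu₀S) with hlt | heq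
        · linarith [hw₀val]
        · exfalso
          -- midpoint beats the max
          have hmid : ((1:ℝ)/2) • u₀ + ((1:ℝ)/2) • w₀ ∈ S₂ :=
            hS₂c hu₀S hw₀S (by norm_num) (by norm_num) (by norm_num)
          have hstrict := (hconv a₁ ha₁).2 hu₀S hw₀S hu₀ne (by norm_num : (0:ℝ) < 1/2)
            (by norm_num : (0:ℝ) < 1/2) (by norm_num)
          have hdotm : a₂ ⬝ᵥ (((1:ℝ)/2) • u₀ + ((1:ℝ)/2) • w₀)
              = (1/2) * (a₂ ⬝ᵥ u₀) + (1/2) * (a₂ ⬝ᵥ w₀) := by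
            simp [dotProduct_add, dotProduct_smul, smul_eq_mul]
          have hφm : φ₀ (((1:ℝ)/2) • u₀ + ((1:ℝ)/2) • w₀)
              > (1/2) * φ₀ u₀ + (1/2) * φ₀ w₀ := by
            simp only [hφ₀, hdotm]
            simp only [smul_eq_mul] at hstrict
            linarith
          have h1 : φ₀ (((1:ℝ)/2) • u₀ + ((1:ℝ)/2) • w₀) ≤ g (a₁, a₂) := hup _ hmid
          rw [heq] at hφm
          linarith [hw₀val]
      set ε₀ := (φ₀ w₀ - φ₀ u₀) / 3 with hε₀def
      have hε₀pos : 0 < ε₀ := by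
        rw [hε₀def]
        exact div_pos (sub_pos.2 hgap) (by norm_num)
      -- uniform continuity of H on compact T
      set H : ℝ × (Fin n₂ → ℝ) → ℝ := fun p => h (a₁ + p.1 • v, p.2) with hH
      set T : Set (ℝ × (Fin n₂ → ℝ)) := Metric.closedBall (0:ℝ) c' ×ˢ Metric.closedBall w₀ r with hT
      have hTcpt : IsCompact T := (isCompact_closedBall _ _).prod (isCompact_closedBall _ _)
      have hHcont : ContinuousOn H T := by
        apply hjoint.continuousOn.comp (by fun_prop)
        intro p hp
        obtain ⟨hp1, hp2⟩ := hp
        refine ⟨hc'I p.1 ?_, hball hp2⟩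
        simpa [Real.dist_eq] using Metric.mem_closedBall.1 hp1
      have hHuc := hTcpt.uniformContinuousOn_of_continuous hHcont
      obtain ⟨δ, hδpos, hδ⟩ := Metric.uniformContinuousOn_iff.1 hHuc ε₀ hε₀pos
      -- main eventual bound
      have hfinal : ∀ s : ℝ, |s| < min δ c' → dist (g2 (a₁ + s • v, a₂)) w₀ ≤ r := by
        intro s hs
        have hsc' : |s| ≤ c' := le_of_lt (lt_of_lt_of_le hs (min_le_right _ _))
        have hsδ : |s| < δ := lt_of_lt_of_le hs (min_le_left _ _)
        have hs₁ : a₁ + s • v ∈ S₁ := hc'I s hsc'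
        obtain ⟨hWS, hWval⟩ := key (a₁ + s • v) hs₁ a₂ ha₂
        set W := g2 (a₁ + s • v, a₂) with hWdef
        by_contra hcon
        push_neg at hcon
        set d := dist W w₀ with hd
        have hdpos : (0:ℝ) < d := lt_trans hrpos hcon
        set lam := r / d with hlam
        have hlampos : 0 < lam := by positivity
        have hlamlt : lam < 1 := (div_lt_one hdpos).2 hcon
        set u' := (1 - lam) • w₀ + lam • W with hu'
        have hu'S : u' ∈ S₂ := hS₂c hw₀S hWS (by linarith) (by linarith) (by ring)
        have hu'dist : dist u' w₀ = r := by
          have : u' - w₀ = lam • (W - w₀) := by rw [hu']; module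
          rw [dist_eq_norm, this, norm_smul, Real.norm_eq_abs, abs_of_pos hlampos,
            ← dist_eq_norm, ← hd, hlam]
          exact div_mul_cancel₀ r hdpos.ne'
        have hu'K : u' ∈ K := by simp only [hK, Metric.mem_sphere]; exact hu'dist
        have hu'ball : u' ∈ Metric.closedBall w₀ r := Metric.sphere_subset_closedBall hu'K
        -- φs and its properties
        set φs : (Fin n₂ → ℝ) → ℝ := fun u => a₂ ⬝ᵥ u - h (a₁ + s • v, u) with hφs
        -- (ii) W is the maximizer for φs
        have hWmax : φs w₀ ≤ φs W := by
          have h1 : φs w₀ ≤ g (a₁ + s • v, a₂) := (hg _ hs₁ a₂ ha₂).2 ⟨w₀, hw₀S, rfl⟩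
          have h2 : g (a₁ + s • v, a₂) = φs W := by simp only [hφs]; linarith [hWval]
          linarith
        -- (i) concavity
        have hconc : (1 - lam) * φs w₀ + lam * φs W ≤ φs u' := by
          have hcv := (hconv _ hs₁).convexOn.2 hw₀S hWS (by linarith : (0:ℝ) ≤ 1 - lam)
            (le_of_lt hlampos) (by ring)
          have hdotu' : a₂ ⬝ᵥ u' = (1 - lam) * (a₂ ⬝ᵥ w₀) + lam * (a₂ ⬝ᵥ W) := by
            rw [hu']; simp [dotProduct_add, dotProduct_smul, smul_eq_mul]
          simp only [smul_eq_mul] at hcv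
          rw [← hu'] at hcv
          simp only [hφs]
          linarith [hdotu']
        have hφsu' : φs w₀ ≤ φs u' := by nlinarith [hWmax, hconc]
        -- (iii) uniform closeness on the closed ball
        have hclose : ∀ u ∈ Metric.closedBall w₀ r, |φs u - φ₀ u| < ε₀ := by
          intro u hu
          have hmem1 : ((s, u) : ℝ × (Fin n₂ → ℝ)) ∈ T := by
            constructor
            · simpa [Real.dist_eq] using hsc'
            · exact hu
          have hmem0 : ((0, u) : ℝ × (Fin n₂ → ℝ)) ∈ T := by
            constructor
            · simp [hc'pos.le]
            · exact hu
          have hdist : dist ((s, u) : ℝ × (Fin n₂ → ℝ)) (0, u) < δ := by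
            rw [Prod.dist_eq]
            simp [Real.dist_eq, hsδ]
          have := hδ _ hmem1 _ hmem0 hdist
          have heval : φs u - φ₀ u = H (0, u) - H (s, u) := by
            simp only [hφs, hφ₀, hH, zero_smul, add_zero]
            ring
          rw [heval]
          rw [Real.dist_eq] at this
          rw [abs_sub_comm]
          exact this
        have hc1' := hclose u' hu'ball
        have hc2' := hclose w₀ (Metric.mem_closedBall_self hrpos.le)
        have hmax' : φ₀ u' ≤ φ₀ u₀ := hu₀max hu'K
        have : φ₀ w₀ - φ₀ u₀ = 3 * ε₀ := by rw [hε₀def]; ring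
        have habs1 := abs_lt.1 hc1'
        have habs2 := abs_lt.1 hc2'
        linarith
      -- conclude
      have hmem : ∀ᶠ s : ℝ in nhds 0, |s| < min δ c' :=
        eventually_abs_sub_lt 0 (lt_min hδpos hc'pos) |>.mono (by intro s hs; simpa using hs)
      filter_upwards [hmem] with s hs
      calc dist (g2 (a₁ + s • v, a₂)) w₀ ≤ r := hfinal s hs
        _ ≤ ε / 2 := min_le_left _ _
        _ < ε := by linarith
    obtain ⟨hw₀S, hkey0⟩ := key a₁ ha₁ a₂ ha₂
    set w₀ := g2 (a₁, a₂) with hw₀def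
    have hzS' : ((a₁, w₀) : (Fin n₁ → ℝ) × (Fin n₂ → ℝ)) ∈ S₁ ×ˢ S₂ := ⟨ha₁, hw₀S⟩
    set L := -(h1 (a₁, w₀) ⬝ᵥ v) with hLdef
    have hI : ∀ᶠ s : ℝ in nhds 0, a₁ + s • v ∈ S₁ := by
      have hc1 : Continuous fun s : ℝ => a₁ + s • v := by continuity
      have h0 : a₁ + (0:ℝ) • v = a₁ := by simp
      exact hc1.continuousAt.eventually_mem (by rw [h0]; exact hS₁o.mem_nhds ha₁)
    -- A tendsto
    have hFA : HasDerivAt (fun s : ℝ => h (a₁ + s • v, w₀)) (h1 (a₁, w₀) ⬝ᵥ v) 0 :=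
      hh1 (a₁, w₀) hzS' v
    have hA : Filter.Tendsto (fun s : ℝ => (h (a₁, w₀) - h (a₁ + s • v, w₀)) / s)
        (nhdsWithin 0 {(0:ℝ)}ᶜ) (nhds L) := by
      have ht := (hasDerivAt_iff_tendsto_slope.1 hFA).neg
      refine ht.congr fun s => ?_
      simp only [slope_def_field, zero_smul, add_zero, sub_zero]
      ring
    -- B tendsto
    have hB : Filter.Tendsto (fun s : ℝ =>
        (h (a₁, g2 (a₁ + s • v, a₂)) - h (a₁ + s • v, g2 (a₁ + s • v, a₂))) / s)
        (nhdsWithin 0 {(0:ℝ)}ᶜ) (nhds L) := by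
      rw [Metric.tendsto_nhds]
      intro ε hε
      set ε' := ε / (2 * (‖v‖ + 1)) with hε'def
      have hε'pos : 0 < ε' := by positivity
      have hfc : ContinuousOn (fderiv ℝ h) (S₁ ×ˢ S₂) :=
        hjoint.continuousOn_fderiv_of_isOpen hSo le_rfl
      have hca : ContinuousAt (fderiv ℝ h) (a₁, w₀) := hfc.continuousAt (hSo.mem_nhds hzS')
      have hev : ∀ᶠ z in nhds ((a₁, w₀) : (Fin n₁ → ℝ) × (Fin n₂ → ℝ)),
          ‖fderiv ℝ h z - fderiv ℝ h (a₁, w₀)‖ < ε' := by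
        filter_upwards [Metric.tendsto_nhds.1 hca ε' hε'pos] with z hz
        rwa [dist_eq_norm] at hz
      obtain ⟨ρ₁, hρ₁pos, hρ₁⟩ := Metric.eventually_nhds_iff_ball.1 hev
      obtain ⟨ρ₂, hρ₂pos, hρ₂⟩ := Metric.isOpen_iff.1 hSo (a₁, w₀) hzS'
      set ρ := min ρ₁ ρ₂ with hρdef
      have hρpos : 0 < ρ := lt_min hρ₁pos hρ₂pos
      set B := Metric.ball ((a₁, w₀) : (Fin n₁ → ℝ) × (Fin n₂ → ℝ)) ρ with hBdef
      have hBS : B ⊆ S₁ ×ˢ S₂ :=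
        subset_trans (Metric.ball_subset_ball (min_le_right _ _)) hρ₂
      have hBbound : ∀ x ∈ B, ‖fderiv ℝ h x - fderiv ℝ h (a₁, w₀)‖ ≤ ε' := fun x hx =>
        le_of_lt (hρ₁ x (Metric.ball_subset_ball (min_le_left _ _) hx))
      have hder : ∀ x ∈ B, HasFDerivWithinAt (fun z => h z - fderiv ℝ h (a₁, w₀) z)
          (fderiv ℝ h x - fderiv ℝ h (a₁, w₀)) B x := by
        intro x hx
        have hdAt : DifferentiableAt ℝ h x :=
          ((hjoint.differentiableOn one_ne_zero) x (hBS hx)).differentiableAt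
            (hSo.mem_nhds (hBS hx))
        exact (hdAt.hasFDerivAt.sub (fderiv ℝ h (a₁, w₀)).hasFDerivAt).hasFDerivWithinAt
      have hWball : ∀ᶠ s : ℝ in nhdsWithin 0 {(0:ℝ)}ᶜ, dist (g2 (a₁ + s • v, a₂)) w₀ < ρ :=
        Metric.tendsto_nhds.1 (hWtend.mono_left nhdsWithin_le_nhds) ρ hρpos
      have hsv : ∀ᶠ s : ℝ in nhds (0:ℝ), |s| * ‖v‖ < ρ := by
        filter_upwards [eventually_abs_sub_lt 0 (show (0:ℝ) < ρ / (‖v‖ + 1) by positivity)]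
          with s hs
        rw [sub_zero] at hs
        calc |s| * ‖v‖ ≤ |s| * (‖v‖ + 1) := by nlinarith [abs_nonneg s, norm_nonneg v]
          _ < (ρ / (‖v‖ + 1)) * (‖v‖ + 1) := by
              apply mul_lt_mul_of_pos_right hs; positivity
          _ = ρ := by field_simp
      filter_upwards [hWball, hsv.filter_mono nhdsWithin_le_nhds, self_mem_nhdsWithin]
        with s hs1 hs2 hs0
      have hsne : s ≠ 0 := hs0
      set W := g2 (a₁ + s • v, a₂) with hWdef
      set z : (Fin n₁ → ℝ) × (Fin n₂ → ℝ) := (a₁ + s • v, W) with hzdef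
      set z' : (Fin n₁ → ℝ) × (Fin n₂ → ℝ) := (a₁, W) with hz'def
      have hnormsv : ‖s • v‖ = |s| * ‖v‖ := by rw [norm_smul, Real.norm_eq_abs]
      have hz : z ∈ B := by
        rw [hBdef, Metric.mem_ball, hzdef, Prod.dist_eq]
        apply max_lt
        · simpa [dist_eq_norm, add_sub_cancel_left, hnormsv] using hs2
        · exact hs1
      have hz' : z' ∈ B := by
        rw [hBdef, Metric.mem_ball, hz'def, Prod.dist_eq]
        apply max_lt
        · simpa using hρpos
        · exact hs1
      have hest := Convex.norm_image_sub_le_of_norm_hasFDerivWithin_le hder hBbound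
        (convex_ball _ _) hz' hz
      have hzz' : z - z' = ((s • v : Fin n₁ → ℝ), (0 : Fin n₂ → ℝ)) := by
        rw [hzdef, hz'def, Prod.mk_sub_mk]
        simp
      have hmapeq : fderiv ℝ h (a₁, w₀) (z - z') = s * (h1 (a₁, w₀) ⬝ᵥ v) := by
        rw [hzz']
        have he : ((s • v : Fin n₁ → ℝ), (0 : Fin n₂ → ℝ))
            = s • ((v, 0) : (Fin n₁ → ℝ) × (Fin n₂ → ℝ)) := by
          rw [Prod.smul_mk, smul_zero]
        rw [he, _root_.map_smul, hid (a₁, w₀) hzS' v, smul_eq_mul]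
      have hnormzz : ‖z - z'‖ = |s| * ‖v‖ := by
        rw [hzz', Prod.norm_def]
        simp only [norm_zero, hnormsv]
        exact max_eq_left (by positivity)
      have hrw : (fun w => h w - fderiv ℝ h (a₁, w₀) w) z
            - (fun w => h w - fderiv ℝ h (a₁, w₀) w) z'
          = (h z - h z') - s * (h1 (a₁, w₀) ⬝ᵥ v) := by
        simp only
        rw [← hmapeq, map_sub]
        ring
      rw [hrw, hnormzz, Real.norm_eq_abs] at hest
      -- conclude
      have hsabs : (0:ℝ) < |s| := abs_pos.2 hsne
      have heq2 : (h (a₁, W) - h (a₁ + s • v, W)) / s - L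
          = -(((h z - h z') - s * (h1 (a₁, w₀) ⬝ᵥ v)) / s) := by
        rw [hLdef, hzdef, hz'def]
        field_simp
        ring
      rw [Real.dist_eq, heq2, abs_neg, abs_div]
      have step1 : |h z - h z' - s * (h1 (a₁, w₀) ⬝ᵥ v)| / |s| ≤ ε' * ‖v‖ := by
        rw [div_le_iff₀ hsabs]
        calc |h z - h z' - s * (h1 (a₁, w₀) ⬝ᵥ v)| ≤ ε' * (|s| * ‖v‖) := hest
          _ = ε' * ‖v‖ * |s| := by ring
      have step2 : ε' * ‖v‖ < ε := by
        have he3 : ε' * (‖v‖ + 1) = ε / 2 := by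
          rw [hε'def]; field_simp
        nlinarith [hε'pos, norm_nonneg v]
      exact lt_of_le_of_lt step1 step2
    -- sandwich
    have hsand : ∀ᶠ s : ℝ in nhdsWithin 0 {(0:ℝ)}ᶜ,
        min ((h (a₁, w₀) - h (a₁ + s • v, w₀)) / s)
            ((h (a₁, g2 (a₁ + s • v, a₂)) - h (a₁ + s • v, g2 (a₁ + s • v, a₂))) / s)
          ≤ (g (a₁ + s • v, a₂) - g (a₁, a₂)) / s ∧
        (g (a₁ + s • v, a₂) - g (a₁, a₂)) / s
          ≤ max ((h (a₁, w₀) - h (a₁ + s • v, w₀)) / s)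
            ((h (a₁, g2 (a₁ + s • v, a₂)) - h (a₁ + s • v, g2 (a₁ + s • v, a₂))) / s) := by
      filter_upwards [hI.filter_mono nhdsWithin_le_nhds, self_mem_nhdsWithin] with s hs₁ hs0
      have hsne : s ≠ 0 := hs0
      obtain ⟨hWS, hWval⟩ := key (a₁ + s • v) hs₁ a₂ ha₂
      set W := g2 (a₁ + s • v, a₂) with hWdef
      have n1 : h (a₁, w₀) - h (a₁ + s • v, w₀) ≤ g (a₁ + s • v, a₂) - g (a₁, a₂) := by
        have := (hg _ hs₁ a₂ ha₂).2 ⟨w₀, hw₀S, rfl⟩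
        linarith [hkey0]
      have n2 : g (a₁ + s • v, a₂) - g (a₁, a₂) ≤ h (a₁, W) - h (a₁ + s • v, W) := by
        have := (hg a₁ ha₁ a₂ ha₂).2 ⟨W, hWS, rfl⟩
        linarith [hWval]
      rcases hsne.lt_or_gt with hneg | hpos
      · constructor
        · exact le_trans (min_le_right _ _) ((div_le_div_right_of_neg hneg).2 n2)
        · exact le_trans ((div_le_div_right_of_neg hneg).2 n1) (le_max_left _ _)
      · constructor
        · refine le_trans (min_le_left _ _) ?_
          exact div_le_div_of_nonneg_right n1 hpos.le
        · refine le_trans ?_ (le_max_right _ _)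
          exact div_le_div_of_nonneg_right n2 hpos.le
    have hmin : Filter.Tendsto (fun s : ℝ => min ((h (a₁, w₀) - h (a₁ + s • v, w₀)) / s)
        ((h (a₁, g2 (a₁ + s • v, a₂)) - h (a₁ + s • v, g2 (a₁ + s • v, a₂))) / s))
        (nhdsWithin 0 {(0:ℝ)}ᶜ) (nhds L) := by
      simpa using hA.min hB
    have hmax : Filter.Tendsto (fun s : ℝ => max ((h (a₁, w₀) - h (a₁ + s • v, w₀)) / s)
        ((h (a₁, g2 (a₁ + s • v, a₂)) - h (a₁ + s • v, g2 (a₁ + s • v, a₂))) / s))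
        (nhdsWithin 0 {(0:ℝ)}ᶜ) (nhds L) := by
      simpa using hA.max hB
    have hslope := tendsto_of_tendsto_of_tendsto_of_le_of_le' hmin hmax
      (hsand.mono fun s hs => hs.1) (hsand.mono fun s hs => hs.2)
    rw [hasDerivAt_iff_tendsto_slope]
    refine hslope.congr fun s => ?_
    simp only [slope_def_field, zero_smul, add_zero, sub_zero]
end

section
/- Fix T > 0, let r̃ : S → [0,∞) be continuous, and for each edge ω ∈ E let z^ω = (z₁^ω, z₂^ω) : [0,T] × [0, ℓ(ω)] → S be continuously differentiable. Assume, for all ω, t, x: (i) ∂ₜz₁^ω = −∂ₓ( ∂₂h(z^ω) ) and (ii) ∂ₜz₂^ω = −∂ₓ( ∂₁h(z^ω) ) − r̃(z^ω) · ∂₂h(z^ω); and assume the coupling conditions at every interior node ν ∈ N₀ and every t ∈ [0,T]: (iii) Σ_{ω incident to ν} n^ω[ν] · ∂₂h(z^ω(t, x_ν^ω)) = 0, and (iv) ∂₁h(z^ω(t, x_ν^ω)) = ∂₁h(z^{ω̃}(t, x_ν^{ω̃})) for any two edges ω, ω̃ incident to ν. Then the Hamiltonian H̃(t) = Σ_{ω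 ∈ E} ∫₀^{ℓ(ω)} h(z^ω(t,x)) dx is differentiable in t and satisfies, for all t ∈ [0,T], H̃'(t) = Σ_{ν ∈ N∂} n^{ω_ν}[ν] · ∂₁h(z^{ω_ν}(t, x_ν^{ω_ν})) · ∂₂h(z^{ω_ν}(t, x_ν^{ω_ν})) − Σ_{ω ∈ E} ∫₀^{ℓ(ω)} r̃(z^ω(t,x)) · ( ∂₂h(z^ω(t,x)) )² dx, and in particular H̃'(t) ≤ Σ_{ν ∈ N∂} n^{ω_ν}[ν] · ∂₁h(z^{ω_ν}(t, x_ν^{ω_ν})) · ∂₂h(z^{ω_ν}(t, x_ν^{ω_ν})), where ω_ν denotes the unique edge incident to the boundary node ν. -/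
open Matrix Set

open MeasureTheory

theorem stmt9_edge
    (S : Set (ℝ × ℝ)) (hSo : IsOpen S)
    (h h1 h2 : ℝ × ℝ → ℝ) (hC2 : ContDiffOn ℝ 2 h S)
    (hd1 : ∀ z ∈ S, HasDerivAt (fun x => h (x, z.2)) (h1 z) z.1)
    (hd2 : ∀ z ∈ S, HasDerivAt (fun y => h (z.1, y)) (h2 z) z.2)
    (rt : ℝ × ℝ → ℝ) (hrtc : ContinuousOn rt S)
    (T : ℝ) (hT : 0 < T) (L : ℝ) (hL : 0 < L)
    (w : ℝ → ℝ → ℝ × ℝ)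
    (hwS : ∀ t ∈ Set.Icc (0:ℝ) T, ∀ x ∈ Set.Icc (0:ℝ) L, w t x ∈ S)
    (hwC1 : ContDiffOn ℝ 1 (fun p : ℝ × ℝ => w p.1 p.2) (Set.Icc (0:ℝ) T ×ˢ Set.Icc (0:ℝ) L))
    (q p : ℝ → ℝ → ℝ)
    (hq : ∀ t ∈ Set.Icc (0:ℝ) T, ∀ x ∈ Set.Icc (0:ℝ) L,
      HasDerivWithinAt (fun y => h2 (w t y)) (q t x) (Set.Icc (0:ℝ) L) x ∧
      HasDerivWithinAt (fun s => (w s x).1) (-(q t x)) (Set.Icc (0:ℝ) T) t)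
    (hp : ∀ t ∈ Set.Icc (0:ℝ) T, ∀ x ∈ Set.Icc (0:ℝ) L,
      HasDerivWithinAt (fun y => h1 (w t y)) (p t x) (Set.Icc (0:ℝ) L) x ∧
      HasDerivWithinAt (fun s => (w s x).2) (-(p t x) - rt (w t x) * h2 (w t x))
        (Set.Icc (0:ℝ) T) t) :
    ∀ t ∈ Set.Icc (0:ℝ) T,
      HasDerivWithinAt (fun s => ∫ x in (0:ℝ)..L, h (w s x))
        (h1 (w t 0) * h2 (w t 0) - h1 (w t L) * h2 (w t L)
          - ∫ x in (0:ℝ)..L, rt (w t x) * (h2 (w t x))^2) (Set.Icc (0:ℝ) T) t := by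
  -- ### Part 1: facts about h1, h2
  have hdiff : ∀ z ∈ S, HasFDerivAt h (fderiv ℝ h z) z := by
    intro z hz
    exact (hC2.contDiffAt (hSo.mem_nhds hz)).differentiableAt (by norm_num) |>.hasFDerivAt
  have h1eq : ∀ z ∈ S, h1 z = fderiv ℝ h z (1, 0) := by
    intro z hz
    have hj : HasDerivAt (fun x : ℝ => ((x, z.2) : ℝ × ℝ)) (1, 0) z.1 :=
      (hasDerivAt_id z.1).prodMk (hasDerivAt_const z.1 z.2)
    have hcomp := (hdiff z hz).comp_hasDerivAt z.1 (by simpa using hj)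
    exact (hd1 z hz).unique (by simpa [Function.comp_def] using hcomp)
  have h2eq : ∀ z ∈ S, h2 z = fderiv ℝ h z (0, 1) := by
    intro z hz
    have hj : HasDerivAt (fun y : ℝ => ((z.1, y) : ℝ × ℝ)) (0, 1) z.2 :=
      (hasDerivAt_const z.2 z.1).prodMk (hasDerivAt_id z.2)
    have hcomp := (hdiff z hz).comp_hasDerivAt z.2 (by simpa using hj)
    exact (hd2 z hz).unique (by simpa [Function.comp_def] using hcomp)
  have happ : ∀ z ∈ S, ∀ a b : ℝ, fderiv ℝ h z (a, b) = a * h1 z + b * h2 z := by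
    intro z hz a b
    have : ((a, b) : ℝ × ℝ) = a • ((1:ℝ), (0:ℝ)) + b • ((0:ℝ), (1:ℝ)) := by
      simp [Prod.ext_iff]
    rw [this, map_add, (fderiv ℝ h z).map_smul, (fderiv ℝ h z).map_smul,
      h1eq z hz, h2eq z hz]
    simp [smul_eq_mul]
  have hfC1 : ContDiffOn ℝ 1 (fun z => fderiv ℝ h z) S :=
    hC2.fderiv_of_isOpen hSo (by norm_num)
  have h1C : ContDiffOn ℝ 1 h1 S :=
    (hfC1.clm_apply contDiffOn_const).congr (fun z hz => h1eq z hz)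
  have h2C : ContDiffOn ℝ 1 h2 S :=
    (hfC1.clm_apply contDiffOn_const).congr (fun z hz => h2eq z hz)
  -- ### Part 2: the rectangle and joint continuity of q and p
  set R : Set (ℝ × ℝ) := Set.Icc (0:ℝ) T ×ˢ Set.Icc (0:ℝ) L with hR
  have hRu : UniqueDiffOn ℝ R := (uniqueDiffOn_Icc hT).prod (uniqueDiffOn_Icc hL)
  have hRc : IsCompact R := isCompact_Icc.prod isCompact_Icc
  have hmaps : Set.MapsTo (fun p : ℝ × ℝ => w p.1 p.2) R S := fun pt hpt =>
    hwS pt.1 hpt.1 pt.2 hpt.2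
  have hwCont : ContinuousOn (fun p : ℝ × ℝ => w p.1 p.2) R := hwC1.continuousOn
  have hcomp1 : ContDiffOn ℝ 1 (fun pt : ℝ × ℝ => h1 (w pt.1 pt.2)) R :=
    h1C.comp hwC1 hmaps
  have hcomp2 : ContDiffOn ℝ 1 (fun pt : ℝ × ℝ => h2 (w pt.1 pt.2)) R :=
    h2C.comp hwC1 hmaps
  -- identification of q and p with fderivWithin
  have slice : ∀ (g : ℝ × ℝ → ℝ), ContDiffOn ℝ 1 g R →
      ∀ t ∈ Set.Icc (0:ℝ) T, ∀ x ∈ Set.Icc (0:ℝ) L,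
      HasDerivWithinAt (fun y => g (t, y)) (fderivWithin ℝ g R (t, x) (0, 1))
        (Set.Icc (0:ℝ) L) x := by
    intro g hg t ht x hx
    have hgd : HasFDerivWithinAt g (fderivWithin ℝ g R (t, x)) R (t, x) :=
      (hg.differentiableOn one_ne_zero (t, x) ⟨ht, hx⟩).hasFDerivWithinAt
    have hj : HasDerivWithinAt (fun y : ℝ => ((t, y) : ℝ × ℝ)) (0, 1) (Set.Icc (0:ℝ) L) x :=
      ((hasDerivAt_const x t).prodMk (hasDerivAt_id x)).hasDerivWithinAt
    have hjm : Set.MapsTo (fun y : ℝ => ((t, y) : ℝ × ℝ)) (Set.Icc (0:ℝ) L) R :=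
      fun y hy => ⟨ht, hy⟩
    exact hgd.comp_hasDerivWithinAt x hj hjm
  have hqeq : ∀ t ∈ Set.Icc (0:ℝ) T, ∀ x ∈ Set.Icc (0:ℝ) L,
      q t x = fderivWithin ℝ (fun pt : ℝ × ℝ => h2 (w pt.1 pt.2)) R (t, x) (0, 1) := by
    intro t ht x hx
    have h1' := (hq t ht x hx).1
    have h2' := slice _ hcomp2 t ht x hx
    have := h1'.derivWithin (uniqueDiffOn_Icc hL x hx)
    rw [← this, h2'.derivWithin (uniqueDiffOn_Icc hL x hx)]
  have hpeq : ∀ t ∈ Set.Icc (0:ℝ) T, ∀ x ∈ Set.Icc (0:ℝ) L,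
      p t x = fderivWithin ℝ (fun pt : ℝ × ℝ => h1 (w pt.1 pt.2)) R (t, x) (0, 1) := by
    intro t ht x hx
    have h1' := (hp t ht x hx).1
    have h2' := slice _ hcomp1 t ht x hx
    have := h1'.derivWithin (uniqueDiffOn_Icc hL x hx)
    rw [← this, h2'.derivWithin (uniqueDiffOn_Icc hL x hx)]
  have hqc : ContinuousOn (fun pt : ℝ × ℝ => q pt.1 pt.2) R := by
    have : ContinuousOn (fun pt : ℝ × ℝ =>
        fderivWithin ℝ (fun pt : ℝ × ℝ => h2 (w pt.1 pt.2)) R pt (0, 1)) R :=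
      ((hcomp2.continuousOn_fderivWithin hRu le_rfl).clm_apply continuousOn_const)
    exact this.congr (fun pt hpt => by
      rw [show pt = (pt.1, pt.2) from rfl] at hpt ⊢
      exact hqeq pt.1 hpt.1 pt.2 hpt.2)
  have hpc : ContinuousOn (fun pt : ℝ × ℝ => p pt.1 pt.2) R := by
    have : ContinuousOn (fun pt : ℝ × ℝ =>
        fderivWithin ℝ (fun pt : ℝ × ℝ => h1 (w pt.1 pt.2)) R pt (0, 1)) R :=
      ((hcomp1.continuousOn_fderivWithin hRu le_rfl).clm_apply continuousOn_const)
    exact this.congr (fun pt hpt => by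
      rw [show pt = (pt.1, pt.2) from rfl] at hpt ⊢
      exact hpeq pt.1 hpt.1 pt.2 hpt.2)
  -- ### Part 3: the integrand φ and its properties
  set φ : ℝ → ℝ → ℝ := fun t x => -(h1 (w t x) * q t x) - h2 (w t x) * p t x
      - rt (w t x) * (h2 (w t x))^2 with hφdef
  have hφc : ContinuousOn (fun pt : ℝ × ℝ => φ pt.1 pt.2) R := by
    have hh1 : ContinuousOn (fun pt : ℝ × ℝ => h1 (w pt.1 pt.2)) R := hcomp1.continuousOn
    have hh2 : ContinuousOn (fun pt : ℝ × ℝ => h2 (w pt.1 pt.2)) R := hcomp2.continuousOn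
    have hrtw : ContinuousOn (fun pt : ℝ × ℝ => rt (w pt.1 pt.2)) R :=
      hrtc.comp hwCont hmaps
    exact ((hh1.mul hqc).neg.sub (hh2.mul hpc)).sub (hrtw.mul (hh2.pow 2))
  -- time derivative of h ∘ w
  have htderiv : ∀ t ∈ Set.Icc (0:ℝ) T, ∀ x ∈ Set.Icc (0:ℝ) L,
      HasDerivWithinAt (fun s => h (w s x)) (φ t x) (Set.Icc (0:ℝ) T) t := by
    intro t ht x hx
    have hz : w t x ∈ S := hwS t ht x hx
    have hw' : HasDerivWithinAt (fun s => w s x)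
        ((-(q t x), -(p t x) - rt (w t x) * h2 (w t x)) : ℝ × ℝ) (Set.Icc (0:ℝ) T) t :=
      (hq t ht x hx).2.prodMk (hp t ht x hx).2
    have hc := (hdiff _ hz).comp_hasDerivWithinAt t hw'
    have : fderiv ℝ h (w t x) (-(q t x), -(p t x) - rt (w t x) * h2 (w t x)) = φ t x := by
      rw [happ _ hz]; simp only [hφdef]; ring
    rwa [this] at hc
  -- FTC in x : the value of ∫ φ t x dx
  have hsliceq : ∀ t ∈ Set.Icc (0:ℝ) T, ContinuousOn (fun x => q t x) (Set.Icc (0:ℝ) L) := by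
    intro t ht
    have := hqc.comp (Continuous.continuousOn (continuous_const.prodMk continuous_id))
      (fun x (hx : x ∈ Set.Icc (0:ℝ) L) => Set.mk_mem_prod ht hx)
    exact this
  have hslicep : ∀ t ∈ Set.Icc (0:ℝ) T, ContinuousOn (fun x => p t x) (Set.Icc (0:ℝ) L) := by
    intro t ht
    exact hpc.comp (Continuous.continuousOn (continuous_const.prodMk continuous_id))
      (fun x (hx : x ∈ Set.Icc (0:ℝ) L) => Set.mk_mem_prod ht hx)
  have hsliceφ : ∀ t ∈ Set.Icc (0:ℝ) T, ContinuousOn (fun x => φ t x) (Set.Icc (0:ℝ) L) := by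
    intro t ht
    exact hφc.comp (Continuous.continuousOn (continuous_const.prodMk continuous_id))
      (fun x (hx : x ∈ Set.Icc (0:ℝ) L) => Set.mk_mem_prod ht hx)
  have hsliceh1 : ∀ t ∈ Set.Icc (0:ℝ) T,
      ContinuousOn (fun x => h1 (w t x)) (Set.Icc (0:ℝ) L) := by
    intro t ht
    exact hcomp1.continuousOn.comp (Continuous.continuousOn (continuous_const.prodMk continuous_id))
      (fun x (hx : x ∈ Set.Icc (0:ℝ) L) => Set.mk_mem_prod ht hx)
  have hsliceh2 : ∀ t ∈ Set.Icc (0:ℝ) T,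
      ContinuousOn (fun x => h2 (w t x)) (Set.Icc (0:ℝ) L) := by
    intro t ht
    exact hcomp2.continuousOn.comp (Continuous.continuousOn (continuous_const.prodMk continuous_id))
      (fun x (hx : x ∈ Set.Icc (0:ℝ) L) => Set.mk_mem_prod ht hx)
  have hslicert : ∀ t ∈ Set.Icc (0:ℝ) T,
      ContinuousOn (fun x => rt (w t x)) (Set.Icc (0:ℝ) L) := by
    intro t ht
    exact (hrtc.comp hwCont hmaps).comp (Continuous.continuousOn (continuous_const.prodMk continuous_id))
      (fun x (hx : x ∈ Set.Icc (0:ℝ) L) => Set.mk_mem_prod ht hx)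
  have hDval : ∀ t ∈ Set.Icc (0:ℝ) T,
      ∫ x in (0:ℝ)..L, φ t x = h1 (w t 0) * h2 (w t 0) - h1 (w t L) * h2 (w t L)
        - ∫ x in (0:ℝ)..L, rt (w t x) * (h2 (w t x))^2 := by
    intro t ht
    -- the product h1·h2 has x-derivative p·h2 + h1·q within Icc
    have hprod : ∀ x ∈ Set.Icc (0:ℝ) L,
        HasDerivWithinAt (fun y => h1 (w t y) * h2 (w t y))
          (p t x * h2 (w t x) + h1 (w t x) * q t x) (Set.Icc (0:ℝ) L) x := by
      intro x hx
      exact (hp t ht x hx).1.mul (hq t ht x hx).1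
    have hintf' : IntervalIntegrable
        (fun x => p t x * h2 (w t x) + h1 (w t x) * q t x) volume 0 L := by
      apply ContinuousOn.intervalIntegrable
      rw [Set.uIcc_of_le hL.le]
      exact ((hslicep t ht).mul (hsliceh2 t ht)).add ((hsliceh1 t ht).mul (hsliceq t ht))
    have hFTC : ∫ x in (0:ℝ)..L, (p t x * h2 (w t x) + h1 (w t x) * q t x)
        = h1 (w t L) * h2 (w t L) - h1 (w t 0) * h2 (w t 0) := by
      apply intervalIntegral.integral_eq_sub_of_hasDeriv_right_of_le hL.le
      · exact (hsliceh1 t ht).mul (hsliceh2 t ht)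
      · intro x hx
        exact (hprod x (Set.mem_Icc_of_Ioo hx)).mono_of_mem_nhdsWithin
          (Icc_mem_nhdsGT_of_mem ⟨hx.1.le, hx.2⟩)
      · exact hintf'
    have hintr : IntervalIntegrable (fun x => rt (w t x) * (h2 (w t x))^2) volume 0 L := by
      apply ContinuousOn.intervalIntegrable
      rw [Set.uIcc_of_le hL.le]
      exact (hslicert t ht).mul ((hsliceh2 t ht).pow 2)
    have : (fun x => φ t x) = fun x =>
        (-(p t x * h2 (w t x) + h1 (w t x) * q t x)) - rt (w t x) * (h2 (w t x))^2 := by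
      funext x; simp only [hφdef]; ring
    have hneg : IntervalIntegrable
        (fun x => -(p t x * h2 (w t x) + h1 (w t x) * q t x)) volume 0 L := hintf'.neg
    rw [this, intervalIntegral.integral_sub hneg hintr,
      intervalIntegral.integral_neg, hFTC]
    ring
  -- ### Part 4: differentiate the integral in time
  set D : ℝ → ℝ := fun t => ∫ x in (0:ℝ)..L, φ t x with hDdef
  obtain ⟨M, hM⟩ : ∃ M, ∀ pt ∈ R, ‖φ pt.1 pt.2‖ ≤ M :=
    hRc.exists_bound_of_continuousOn hφc
  have hDeq : ∀ t : ℝ, D t = ∫ x in Set.Ioc (0:ℝ) L, φ t x := fun t =>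
    intervalIntegral.integral_of_le hL.le
  have hDc : ContinuousOn D (Set.Icc (0:ℝ) T) := by
    have : ContinuousOn (fun t => ∫ x in Set.Ioc (0:ℝ) L, φ t x) (Set.Icc (0:ℝ) T) := by
      apply MeasureTheory.continuousOn_of_dominated (bound := fun _ => M)
      · intro t ht
        exact ((hsliceφ t ht).mono Set.Ioc_subset_Icc_self).aestronglyMeasurable
          measurableSet_Ioc
      · intro t ht
        filter_upwards [MeasureTheory.ae_restrict_mem measurableSet_Ioc] with x hx
        exact hM (t, x) ⟨ht, Set.Ioc_subset_Icc_self hx⟩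
      · exact MeasureTheory.integrable_const M
      · filter_upwards [MeasureTheory.ae_restrict_mem measurableSet_Ioc] with x hx
        exact hφc.comp (Continuous.continuousOn (continuous_id.prodMk continuous_const))
          (fun t ht => Set.mk_mem_prod ht (Set.Ioc_subset_Icc_self hx))
    exact this.congr (fun t _ => hDeq t)
  -- continuity in time of φ and h∘w at fixed x
  have hφtc : ∀ x ∈ Set.Icc (0:ℝ) L, ContinuousOn (fun σ => φ σ x) (Set.Icc (0:ℝ) T) := by
    intro x hx
    exact hφc.comp (Continuous.continuousOn (continuous_id.prodMk continuous_const))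
      (fun t ht => Set.mk_mem_prod ht hx)
  have hhwc : ContinuousOn (fun pt : ℝ × ℝ => h (w pt.1 pt.2)) R :=
    hC2.continuousOn.comp hwCont hmaps
  have hhtc : ∀ x ∈ Set.Icc (0:ℝ) L, ContinuousOn (fun σ => h (w σ x)) (Set.Icc (0:ℝ) T) := by
    intro x hx
    exact hhwc.comp (Continuous.continuousOn (continuous_id.prodMk continuous_const))
      (fun t ht => Set.mk_mem_prod ht hx)
  have hhxc : ∀ s ∈ Set.Icc (0:ℝ) T, ContinuousOn (fun x => h (w s x)) (Set.Icc (0:ℝ) L) := by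
    intro s hs
    exact hhwc.comp (Continuous.continuousOn (continuous_const.prodMk continuous_id))
      (fun x hx => Set.mk_mem_prod hs hx)
  -- pointwise fundamental theorem of calculus in time
  have hpt : ∀ s ∈ Set.Icc (0:ℝ) T, ∀ x ∈ Set.Icc (0:ℝ) L,
      h (w s x) - h (w 0 x) = ∫ σ in (0:ℝ)..s, φ σ x := by
    intro s hs x hx
    have := intervalIntegral.integral_eq_sub_of_hasDeriv_right_of_le hs.1
      ((hhtc x hx).mono (Set.Icc_subset_Icc_right hs.2))
      (fun σ hσ => ((htderiv σ ⟨hσ.1.le, hσ.2.le.trans hs.2⟩ x hx).mono_of_mem_nhdsWithin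
        (Icc_mem_nhdsGT_of_mem ⟨hσ.1.le, lt_of_lt_of_le hσ.2 hs.2⟩)))
      (((hφtc x hx).mono (Set.Icc_subset_Icc_right hs.2)).intervalIntegrable_of_Icc hs.1)
    rw [this]
  -- Fubini
  have hfub : ∀ s ∈ Set.Icc (0:ℝ) T,
      (∫ x in (0:ℝ)..L, ∫ σ in (0:ℝ)..s, φ σ x) = ∫ σ in (0:ℝ)..s, D σ := by
    intro s hs
    rw [intervalIntegral.integral_of_le hL.le, intervalIntegral.integral_of_le hs.1]
    have hswap := MeasureTheory.integral_integral_swap (f := fun x σ => φ σ x)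
      (μ := volume.restrict (Set.Ioc (0:ℝ) L)) (ν := volume.restrict (Set.Ioc (0:ℝ) s)) ?_
    · calc (∫ x in Set.Ioc (0:ℝ) L, ∫ σ in (0:ℝ)..s, φ σ x)
          = ∫ x in Set.Ioc (0:ℝ) L, ∫ σ in Set.Ioc (0:ℝ) s, φ σ x := by
            apply MeasureTheory.setIntegral_congr_fun measurableSet_Ioc
            intro x _
            exact intervalIntegral.integral_of_le hs.1
        _ = ∫ σ in Set.Ioc (0:ℝ) s, ∫ x in Set.Ioc (0:ℝ) L, φ σ x := hswap
        _ = ∫ σ in Set.Ioc (0:ℝ) s, D σ := by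
            apply MeasureTheory.setIntegral_congr_fun measurableSet_Ioc
            intro σ _
            exact (hDeq σ).symm
    · rw [Function.uncurry_def, MeasureTheory.Measure.prod_restrict,
        ← MeasureTheory.Measure.volume_eq_prod]
      apply MeasureTheory.IntegrableOn.mono_set
        (t := Set.Icc (0:ℝ) L ×ˢ Set.Icc (0:ℝ) s)
      · apply ContinuousOn.integrableOn_compact (isCompact_Icc.prod isCompact_Icc)
        exact hφc.comp (Continuous.continuousOn (continuous_snd.prodMk continuous_fst))
          (fun pt hpt => Set.mk_mem_prod
            (Set.Icc_subset_Icc_right hs.2 hpt.2) hpt.1)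
      · exact Set.prod_mono Set.Ioc_subset_Icc_self Set.Ioc_subset_Icc_self
  -- the primitive in time
  have hrep : ∀ s ∈ Set.Icc (0:ℝ) T,
      (∫ x in (0:ℝ)..L, h (w s x)) = (∫ x in (0:ℝ)..L, h (w 0 x)) + ∫ σ in (0:ℝ)..s, D σ := by
    intro s hs
    have hIs : IntervalIntegrable (fun x => h (w s x)) volume 0 L :=
      (hhxc s hs).intervalIntegrable_of_Icc hL.le
    have hI0 : IntervalIntegrable (fun x => h (w 0 x)) volume 0 L :=
      (hhxc 0 (Set.left_mem_Icc.2 hT.le)).intervalIntegrable_of_Icc hL.le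
    have : (∫ x in (0:ℝ)..L, h (w s x)) - ∫ x in (0:ℝ)..L, h (w 0 x)
        = ∫ σ in (0:ℝ)..s, D σ := by
      rw [← intervalIntegral.integral_sub hIs hI0, ← hfub s hs]
      apply intervalIntegral.integral_congr
      intro x hx
      rw [Set.uIcc_of_le hL.le] at hx
      exact hpt s hs x hx
    linarith
  -- FTC for the primitive of D, within Icc 0 T
  have hGderiv : ∀ t ∈ Set.Icc (0:ℝ) T,
      HasDerivWithinAt (fun s => ∫ σ in (0:ℝ)..s, D σ) (D t) (Set.Icc (0:ℝ) T) t := by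
    intro t ht
    haveI : Fact (t ∈ Set.Icc (0:ℝ) T) := ⟨ht⟩
    exact intervalIntegral.integral_hasDerivWithinAt_right
      ((hDc.mono (Set.Icc_subset_Icc_right ht.2)).intervalIntegrable_of_Icc ht.1)
      ⟨Set.Icc 0 T, self_mem_nhdsWithin, hDc.aestronglyMeasurable measurableSet_Icc⟩
      (hDc t ht)
  -- conclude
  intro t ht
  have key : HasDerivWithinAt (fun s => ∫ x in (0:ℝ)..L, h (w s x)) (D t)
      (Set.Icc (0:ℝ) T) t := by
    have hG' : HasDerivWithinAt
        (fun s => (∫ x in (0:ℝ)..L, h (w 0 x)) + ∫ σ in (0:ℝ)..s, D σ) (D t)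
        (Set.Icc (0:ℝ) T) t := (hGderiv t ht).const_add _
    exact hG'.congr (fun s hs => hrep s hs) (hrep t ht)
  rw [hDdef] at key
  rw [← hDval t ht]
  exact key

/-- Energy dissipation on a network: if on each edge
`∂ₜz₁^ω = −∂ₓ(∂₂h(z^ω))` and `∂ₜz₂^ω = −∂ₓ(∂₁h(z^ω)) − r̃(z^ω)·∂₂h(z^ω)` hold, together
with the coupling conditions (conservation of `∂₂h` and continuity of `∂₁h`) at interior
nodes, then the Hamiltonian `H̃(t) = Σ_ω ∫₀^{ℓω} h(z^ω(t,x)) dx` satisfies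
`H̃'(t) = Σ_{ν ∈ N∂} n^{ω_ν}[ν] ∂₁h · ∂₂h − Σ_ω ∫ r̃ (∂₂h)² dx ≤ Σ_{ν ∈ N∂} n^{ω_ν}[ν] ∂₁h · ∂₂h`. -/
theorem stmt9 {V EI : Type*} [Fintype V] [Fintype EI] [DecidableEq V] [DecidableEq EI]
    (α β : EI → V) (hαβ : ∀ ω, α ω ≠ β ω)
    (ℓ : EI → ℝ) (hℓ : ∀ ω, 0 < ℓ ω)
    (N₀ : Finset V)
    (bedge : V → EI)
    (hb : ∀ ν ∉ N₀, (α (bedge ν) = ν ∨ β (bedge ν) = ν) ∧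
      ∀ ω, (α ω = ν ∨ β ω = ν) → ω = bedge ν)
    (S : Set (ℝ × ℝ)) (hSo : IsOpen S) (hSc : Convex ℝ S)
    (h h1 h2 : ℝ × ℝ → ℝ) (hC2 : ContDiffOn ℝ 2 h S)
    (hd1 : ∀ z ∈ S, HasDerivAt (fun x => h (x, z.2)) (h1 z) z.1)
    (hd2 : ∀ z ∈ S, HasDerivAt (fun y => h (z.1, y)) (h2 z) z.2)
    (rt : ℝ × ℝ → ℝ) (hrtc : ContinuousOn rt S) (hrt : ∀ z ∈ S, 0 ≤ rt z)
    (T : ℝ) (hT : 0 < T)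
    (z : EI → ℝ → ℝ → ℝ × ℝ)
    (hzS : ∀ ω, ∀ t ∈ Set.Icc (0:ℝ) T, ∀ x ∈ Set.Icc (0:ℝ) (ℓ ω), z ω t x ∈ S)
    (hzC1 : ∀ ω, ContDiffOn ℝ 1 (fun p : ℝ × ℝ => z ω p.1 p.2)
      (Set.Icc (0:ℝ) T ×ˢ Set.Icc (0:ℝ) (ℓ ω)))
    -- (i) ∂ₜ z₁^ω = −∂ₓ( ∂₂h(z^ω) )
    (q : EI → ℝ → ℝ → ℝ)
    (hq : ∀ ω, ∀ t ∈ Set.Icc (0:ℝ) T, ∀ x ∈ Set.Icc (0:ℝ) (ℓ ω),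
      HasDerivWithinAt (fun y => h2 (z ω t y)) (q ω t x) (Set.Icc (0:ℝ) (ℓ ω)) x ∧
      HasDerivWithinAt (fun s => (z ω s x).1) (-(q ω t x)) (Set.Icc (0:ℝ) T) t)
    -- (ii) ∂ₜ z₂^ω = −∂ₓ( ∂₁h(z^ω) ) − r̃(z^ω)·∂₂h(z^ω)
    (p : EI → ℝ → ℝ → ℝ)
    (hp : ∀ ω, ∀ t ∈ Set.Icc (0:ℝ) T, ∀ x ∈ Set.Icc (0:ℝ) (ℓ ω),
      HasDerivWithinAt (fun y => h1 (z ω t y)) (p ω t x) (Set.Icc (0:ℝ) (ℓ ω)) x ∧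
      HasDerivWithinAt (fun s => (z ω s x).2)
        (-(p ω t x) - rt (z ω t x) * h2 (z ω t x)) (Set.Icc (0:ℝ) T) t)
    -- (iii) conservation of mass flux at interior nodes
    (hcoup : ∀ ν ∈ N₀, ∀ t ∈ Set.Icc (0:ℝ) T,
      ∑ ω : EI, ((if α ω = ν then h2 (z ω t 0) else 0) -
        (if β ω = ν then h2 (z ω t (ℓ ω)) else 0)) = 0)
    -- (iv) continuity of ∂₁h at interior nodes
    (hcont : ∀ ν ∈ N₀, ∀ t ∈ Set.Icc (0:ℝ) T, ∀ ω ω' : EI,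
      (α ω = ν ∨ β ω = ν) → (α ω' = ν ∨ β ω' = ν) →
      h1 (z ω t (if α ω = ν then 0 else ℓ ω)) = h1 (z ω' t (if α ω' = ν then 0 else ℓ ω'))) :
    ∀ t ∈ Set.Icc (0:ℝ) T,
      HasDerivWithinAt (fun s => ∑ ω : EI, ∫ x in (0:ℝ)..(ℓ ω), h (z ω s x))
        ((∑ ν ∈ N₀ᶜ, (if α (bedge ν) = ν
            then h1 (z (bedge ν) t 0) * h2 (z (bedge ν) t 0)
            else - (h1 (z (bedge ν) t (ℓ (bedge ν))) * h2 (z (bedge ν) t (ℓ (bedge ν)))))) -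
          ∑ ω : EI, ∫ x in (0:ℝ)..(ℓ ω), rt (z ω t x) * (h2 (z ω t x))^2)
        (Set.Icc (0:ℝ) T) t ∧
      ((∑ ν ∈ N₀ᶜ, (if α (bedge ν) = ν
            then h1 (z (bedge ν) t 0) * h2 (z (bedge ν) t 0)
            else - (h1 (z (bedge ν) t (ℓ (bedge ν))) * h2 (z (bedge ν) t (ℓ (bedge ν)))))) -
          ∑ ω : EI, ∫ x in (0:ℝ)..(ℓ ω), rt (z ω t x) * (h2 (z ω t x))^2) ≤
        ∑ ν ∈ N₀ᶜ, (if α (bedge ν) = ν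
            then h1 (z (bedge ν) t 0) * h2 (z (bedge ν) t 0)
            else - (h1 (z (bedge ν) t (ℓ (bedge ν))) * h2 (z (bedge ν) t (ℓ (bedge ν))))) := by
  intro t ht
  -- derivative of each edge integral
  have hedge : ∀ ω : EI, HasDerivWithinAt (fun s => ∫ x in (0:ℝ)..(ℓ ω), h (z ω s x))
      (h1 (z ω t 0) * h2 (z ω t 0) - h1 (z ω t (ℓ ω)) * h2 (z ω t (ℓ ω))
        - ∫ x in (0:ℝ)..(ℓ ω), rt (z ω t x) * (h2 (z ω t x))^2) (Set.Icc (0:ℝ) T) t :=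
    fun ω => stmt9_edge S hSo h h1 h2 hC2 hd1 hd2 rt hrtc T hT (ℓ ω) (hℓ ω) (z ω)
      (hzS ω) (hzC1 ω) (q ω) (p ω) (hq ω) (hp ω) t ht
  -- sum of derivatives
  have hsum : HasDerivWithinAt (fun s => ∑ ω : EI, ∫ x in (0:ℝ)..(ℓ ω), h (z ω s x))
      (∑ ω : EI, (h1 (z ω t 0) * h2 (z ω t 0) - h1 (z ω t (ℓ ω)) * h2 (z ω t (ℓ ω))
        - ∫ x in (0:ℝ)..(ℓ ω), rt (z ω t x) * (h2 (z ω t x))^2)) (Set.Icc (0:ℝ) T) t :=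
    HasDerivWithinAt.fun_sum (fun ω _ => hedge ω)
  -- rearrangement of the boundary terms
  have hbt : ∑ ω : EI, (h1 (z ω t 0) * h2 (z ω t 0) - h1 (z ω t (ℓ ω)) * h2 (z ω t (ℓ ω)))
      = ∑ ν ∈ N₀ᶜ, (if α (bedge ν) = ν
          then h1 (z (bedge ν) t 0) * h2 (z (bedge ν) t 0)
          else - (h1 (z (bedge ν) t (ℓ (bedge ν))) * h2 (z (bedge ν) t (ℓ (bedge ν))))) := by
    have step1 : ∀ ω : EI, h1 (z ω t 0) * h2 (z ω t 0) - h1 (z ω t (ℓ ω)) * h2 (z ω t (ℓ ω))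
        = ∑ ν : V, ((if α ω = ν then h1 (z ω t 0) * h2 (z ω t 0) else 0)
          - (if β ω = ν then h1 (z ω t (ℓ ω)) * h2 (z ω t (ℓ ω)) else 0)) := by
      intro ω
      rw [Finset.sum_sub_distrib, Finset.sum_ite_eq, Finset.sum_ite_eq]
      simp
    calc ∑ ω : EI, (h1 (z ω t 0) * h2 (z ω t 0) - h1 (z ω t (ℓ ω)) * h2 (z ω t (ℓ ω)))
        = ∑ ω : EI, ∑ ν : V, ((if α ω = ν then h1 (z ω t 0) * h2 (z ω t 0) else 0)
          - (if β ω = ν then h1 (z ω t (ℓ ω)) * h2 (z ω t (ℓ ω)) else 0)) :=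
          Finset.sum_congr rfl (fun ω _ => step1 ω)
      _ = ∑ ν : V, ∑ ω : EI, ((if α ω = ν then h1 (z ω t 0) * h2 (z ω t 0) else 0)
          - (if β ω = ν then h1 (z ω t (ℓ ω)) * h2 (z ω t (ℓ ω)) else 0)) :=
          Finset.sum_comm
      _ = (∑ ν ∈ N₀, ∑ ω : EI, ((if α ω = ν then h1 (z ω t 0) * h2 (z ω t 0) else 0)
          - (if β ω = ν then h1 (z ω t (ℓ ω)) * h2 (z ω t (ℓ ω)) else 0)))
          + ∑ ν ∈ N₀ᶜ, ∑ ω : EI, ((if α ω = ν then h1 (z ω t 0) * h2 (z ω t 0) else 0)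
          - (if β ω = ν then h1 (z ω t (ℓ ω)) * h2 (z ω t (ℓ ω)) else 0)) :=
          (Finset.sum_add_sum_compl N₀ _).symm
      _ = ∑ ν ∈ N₀ᶜ, (if α (bedge ν) = ν
          then h1 (z (bedge ν) t 0) * h2 (z (bedge ν) t 0)
          else - (h1 (z (bedge ν) t (ℓ (bedge ν))) * h2 (z (bedge ν) t (ℓ (bedge ν))))) := by
          have hint : ∀ ν ∈ N₀, ∑ ω : EI,
              ((if α ω = ν then h1 (z ω t 0) * h2 (z ω t 0) else 0)
              - (if β ω = ν then h1 (z ω t (ℓ ω)) * h2 (z ω t (ℓ ω)) else 0)) = 0 := by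
            intro ν hν
            by_cases hex : ∃ ω0 : EI, α ω0 = ν ∨ β ω0 = ν
            · obtain ⟨ω0, hω0⟩ := hex
              set c : ℝ := h1 (z ω0 t (if α ω0 = ν then 0 else ℓ ω0)) with hc
              have hterm : ∀ ω : EI,
                  ((if α ω = ν then h1 (z ω t 0) * h2 (z ω t 0) else 0)
                  - (if β ω = ν then h1 (z ω t (ℓ ω)) * h2 (z ω t (ℓ ω)) else 0))
                  = c * ((if α ω = ν then h2 (z ω t 0) else 0)
                    - (if β ω = ν then h2 (z ω t (ℓ ω)) else 0)) := by
                intro ω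
                have hA : (if α ω = ν then h1 (z ω t 0) * h2 (z ω t 0) else 0)
                    = c * (if α ω = ν then h2 (z ω t 0) else 0) := by
                  by_cases hα : α ω = ν
                  · rw [if_pos hα, if_pos hα]
                    have := hcont ν hν t ht ω ω0 (Or.inl hα) hω0
                    rw [if_pos hα, ← hc] at this
                    rw [this]
                  · simp [hα]
                have hB : (if β ω = ν then h1 (z ω t (ℓ ω)) * h2 (z ω t (ℓ ω)) else 0)
                    = c * (if β ω = ν then h2 (z ω t (ℓ ω)) else 0) := by
                  by_cases hβ : β ω = ν
                  · have hα : ¬ (α ω = ν) := fun hαν => hαβ ω (hαν.trans hβ.symm)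
                    rw [if_pos hβ, if_pos hβ]
                    have := hcont ν hν t ht ω ω0 (Or.inr hβ) hω0
                    rw [if_neg hα, ← hc] at this
                    rw [this]
                  · simp [hβ]
                rw [hA, hB]; ring
              rw [Finset.sum_congr rfl (fun ω _ => hterm ω), ← Finset.mul_sum,
                hcoup ν hν t ht, mul_zero]
            · push_neg at hex
              apply Finset.sum_eq_zero
              intro ω _
              rw [if_neg (fun hα => (hex ω).1 hα), if_neg (fun hβ => (hex ω).2 hβ)]
              ring
          have hbdry : ∀ ν ∈ N₀ᶜ, (∑ ω : EI,
              ((if α ω = ν then h1 (z ω t 0) * h2 (z ω t 0) else 0)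
              - (if β ω = ν then h1 (z ω t (ℓ ω)) * h2 (z ω t (ℓ ω)) else 0)))
              = (if α (bedge ν) = ν
                then h1 (z (bedge ν) t 0) * h2 (z (bedge ν) t 0)
                else - (h1 (z (bedge ν) t (ℓ (bedge ν))) * h2 (z (bedge ν) t (ℓ (bedge ν))))) := by
            intro ν hν
            have hν' : ν ∉ N₀ := Finset.mem_compl.1 hν
            obtain ⟨hin, huniq⟩ := hb ν hν'
            rw [Finset.sum_eq_single (bedge ν)]
            · rcases hin with hα | hβ
              · have hβ' : ¬ (β (bedge ν) = ν) := fun hβν => hαβ _ (hα.trans hβν.symm)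
                rw [if_pos hα, if_pos hα, if_neg hβ']
                ring
              · have hα' : ¬ (α (bedge ν) = ν) := fun hαν => hαβ _ (hαν.trans hβ.symm)
                rw [if_neg hα', if_neg hα', if_pos hβ]
                ring
            · intro ω _ hne
              rw [if_neg (fun hα => hne (huniq ω (Or.inl hα))),
                if_neg (fun hβ => hne (huniq ω (Or.inr hβ)))]
              ring
            · intro habs
              exact absurd (Finset.mem_univ _) habs
          rw [Finset.sum_congr rfl hint, Finset.sum_const_zero, zero_add]
          exact Finset.sum_congr rfl hbdry
  rw [Finset.sum_sub_distrib, hbt] at hsum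
  refine ⟨hsum, ?_⟩
  have hnn : 0 ≤ ∑ ω : EI, ∫ x in (0:ℝ)..(ℓ ω), rt (z ω t x) * (h2 (z ω t x))^2 := by
    apply Finset.sum_nonneg
    intro ω _
    apply intervalIntegral.integral_nonneg (hℓ ω).le
    intro x hx
    exact mul_nonneg (hrt _ (hzS ω t ht x hx)) (sq_nonneg _)
  linarith
end

section
/- Let Δt > 0, K ∈ ℕ, and let a⁰, a¹, …, a^K ∈ A together with e^k, f^k ∈ ℝᵖ (k = 1, …, K) satisfy the implicit Euler-type scheme: for every k = 1, …, K, (1/Δt) M₁ ( a₁^k − a₁^{k−1} ) = J a₂^k; (1/Δt) ( ∇₂G(a^k) − ∇₂G(a^{k−1}) ) = Jᵀ M₁⁻¹ ∇₁G(a^k) − R(a^k) a₂^k + K₂ e^k; and f^k = K₂ᵀ a₂^k. Then for all 0 ≤ ℓ < k ≤ K with a^ℓ ≠ a^k: H(a^k) − H(a^ℓ) < Δt · Σ_{j=ℓ+1}^{k} ( e^j · f^j − a₂^j · ( R(a^j) a₂^j ) ) ≤ Δt · Σ_{j=ℓ+1}^{k} e^j · f^j. -/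
open Matrix Set

/-- Energy-dissipation inequality for the implicit Euler-type scheme:
for a solution `a⁰, …, a^K` of
`(1/Δt) M₁ (a₁^k − a₁^{k−1}) = J a₂^k`,
`(1/Δt) (∇₂G(a^k) − ∇₂G(a^{k−1})) = Jᵀ M₁⁻¹ ∇₁G(a^k) − R(a^k) a₂^k + K₂ e^k`,
`f^k = K₂ᵀ a₂^k`, one has for `0 ≤ ℓ < k ≤ K` with `a^ℓ ≠ a^k`:
`H(a^k) − H(a^ℓ) < Δt Σ_{j=ℓ+1}^k (e^j·f^j − a₂^j·R(a^j)a₂^j) ≤ Δt Σ_{j=ℓ+1}^k e^j·f^j`,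
where `H(a) = ∇₂G(a)·a₂ − G(a)`. -/
theorem stmt15 {n₁ n₂ p : ℕ}
    (A : Set ((Fin n₁ → ℝ) × (Fin n₂ → ℝ)))
    (G : ((Fin n₁ → ℝ) × (Fin n₂ → ℝ)) → ℝ)
    (G1 : ((Fin n₁ → ℝ) × (Fin n₂ → ℝ)) → (Fin n₁ → ℝ))
    (G2 : ((Fin n₁ → ℝ) × (Fin n₂ → ℝ)) → (Fin n₂ → ℝ))
    -- strict convexity inequality for the Hamiltonian (paper's Lemma 6.2)
    (hconv : ∀ a ∈ A, ∀ ab ∈ A, a ≠ ab →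
      (G2 a ⬝ᵥ a.2 - G a) - (G2 ab ⬝ᵥ ab.2 - G ab) <
        (-(G1 a)) ⬝ᵥ (a.1 - ab.1) + a.2 ⬝ᵥ (G2 a - G2 ab))
    (M₁ : Matrix (Fin n₁) (Fin n₁) ℝ) (hM₁ : M₁.PosDef)
    (J : Matrix (Fin n₁) (Fin n₂) ℝ) (K₂ : Matrix (Fin n₂) (Fin p) ℝ)
    (R : ((Fin n₁ → ℝ) × (Fin n₂ → ℝ)) → Matrix (Fin n₂) (Fin n₂) ℝ)
    (hR : ∀ a ∈ A, (R a).PosSemidef)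
    (Δt : ℝ) (hΔt : 0 < Δt) (K : ℕ)
    (a : ℕ → (Fin n₁ → ℝ) × (Fin n₂ → ℝ)) (e f : ℕ → Fin p → ℝ)
    (haA : ∀ k ≤ K, a k ∈ A)
    -- the implicit Euler-type scheme
    (hsch1 : ∀ k, 1 ≤ k → k ≤ K →
      (1 / Δt) • M₁.mulVec ((a k).1 - (a (k - 1)).1) = J.mulVec (a k).2)
    (hsch2 : ∀ k, 1 ≤ k → k ≤ K →
      (1 / Δt) • (G2 (a k) - G2 (a (k - 1))) =
        Jᵀ.mulVec (M₁⁻¹.mulVec (G1 (a k))) - (R (a k)).mulVec (a k).2 + K₂.mulVec (e k))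
    (hsch3 : ∀ k, 1 ≤ k → k ≤ K → f k = K₂ᵀ.mulVec (a k).2) :
    ∀ l k : ℕ, l < k → k ≤ K → a l ≠ a k →
      (G2 (a k) ⬝ᵥ (a k).2 - G (a k)) - (G2 (a l) ⬝ᵥ (a l).2 - G (a l)) <
        Δt * ∑ j ∈ Finset.Icc (l + 1) k,
          (e j ⬝ᵥ f j - (a j).2 ⬝ᵥ (R (a j)).mulVec (a j).2) ∧
      Δt * ∑ j ∈ Finset.Icc (l + 1) k,
          (e j ⬝ᵥ f j - (a j).2 ⬝ᵥ (R (a j)).mulVec (a j).2) ≤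
        Δt * ∑ j ∈ Finset.Icc (l + 1) k, e j ⬝ᵥ f j := by
  have hMdet : IsUnit M₁.det := isUnit_iff_ne_zero.mpr hM₁.det_pos.ne'
  have hMsym : M₁⁻¹ᵀ = M₁⁻¹ := by
    rw [Matrix.transpose_nonsing_inv]
    congr 1
    simpa [Matrix.IsHermitian] using hM₁.1
  -- key identity: RHS of convexity inequality equals Δt * (e·f - a₂·R a₂)
  have key : ∀ j, 1 ≤ j → j ≤ K →
      (-(G1 (a j))) ⬝ᵥ ((a j).1 - (a (j - 1)).1) + (a j).2 ⬝ᵥ (G2 (a j) - G2 (a (j - 1)))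
        = Δt * (e j ⬝ᵥ f j - (a j).2 ⬝ᵥ (R (a j)).mulVec (a j).2) := by
    intro j hj1 hjK
    have hd1 : (a j).1 - (a (j - 1)).1 = Δt • (M₁⁻¹.mulVec (J.mulVec (a j).2)) := by
      have h2 : M₁.mulVec ((a j).1 - (a (j - 1)).1) = Δt • J.mulVec (a j).2 := by
        calc M₁.mulVec ((a j).1 - (a (j - 1)).1)
            = Δt • ((1 / Δt) • M₁.mulVec ((a j).1 - (a (j - 1)).1)) := by
              rw [smul_smul]; field_simp; rw [one_smul]
          _ = Δt • J.mulVec (a j).2 := by rw [hsch1 j hj1 hjK]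
      calc (a j).1 - (a (j - 1)).1
          = (M₁⁻¹ * M₁).mulVec ((a j).1 - (a (j - 1)).1) := by
            rw [Matrix.nonsing_inv_mul M₁ hMdet, Matrix.one_mulVec]
        _ = M₁⁻¹.mulVec (M₁.mulVec ((a j).1 - (a (j - 1)).1)) := by
            rw [← Matrix.mulVec_mulVec]
        _ = Δt • (M₁⁻¹.mulVec (J.mulVec (a j).2)) := by
            rw [h2, Matrix.mulVec_smul]
    have hd2 : G2 (a j) - G2 (a (j - 1)) =
        Δt • (Jᵀ.mulVec (M₁⁻¹.mulVec (G1 (a j))) - (R (a j)).mulVec (a j).2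
          + K₂.mulVec (e j)) := by
      calc G2 (a j) - G2 (a (j - 1))
          = Δt • ((1 / Δt) • (G2 (a j) - G2 (a (j - 1)))) := by
            rw [smul_smul]; field_simp; rw [one_smul]
        _ = _ := by rw [hsch2 j hj1 hjK]
    have hv : Matrix.vecMul (G1 (a j)) M₁⁻¹ = M₁⁻¹.mulVec (G1 (a j)) := by
      rw [← Matrix.mulVec_transpose, hMsym]
    have c1 : G1 (a j) ⬝ᵥ M₁⁻¹.mulVec (J.mulVec (a j).2)
        = (a j).2 ⬝ᵥ Jᵀ.mulVec (M₁⁻¹.mulVec (G1 (a j))) := by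
      rw [Matrix.dotProduct_mulVec (a j).2, Matrix.vecMul_transpose,
        Matrix.dotProduct_mulVec (G1 (a j)), hv, dotProduct_comm]
    have c2 : (a j).2 ⬝ᵥ K₂.mulVec (e j) = e j ⬝ᵥ f j := by
      rw [hsch3 j hj1 hjK, Matrix.dotProduct_mulVec (e j), Matrix.vecMul_transpose,
        dotProduct_comm]
    rw [hd1, hd2]
    simp only [dotProduct_smul, dotProduct_add, dotProduct_sub,
      neg_dotProduct, smul_eq_mul]
    rw [c1, c2]
    ring
  -- per-step inequality
  have step : ∀ j, 1 ≤ j → j ≤ K →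
      ((G2 (a j) ⬝ᵥ (a j).2 - G (a j)) - (G2 (a (j - 1)) ⬝ᵥ (a (j - 1)).2 - G (a (j - 1)))
        ≤ Δt * (e j ⬝ᵥ f j - (a j).2 ⬝ᵥ (R (a j)).mulVec (a j).2)) ∧
      (a (j - 1) ≠ a j →
        (G2 (a j) ⬝ᵥ (a j).2 - G (a j)) - (G2 (a (j - 1)) ⬝ᵥ (a (j - 1)).2 - G (a (j - 1)))
        < Δt * (e j ⬝ᵥ f j - (a j).2 ⬝ᵥ (R (a j)).mulVec (a j).2)) := by
    intro j hj1 hjK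
    have hkey := key j hj1 hjK
    by_cases hca : a j = a (j - 1)
    · constructor
      · rw [hca] at hkey ⊢
        simp only [sub_self, dotProduct_zero, zero_dotProduct,
          dotProduct_neg, neg_dotProduct] at hkey
        rw [← hkey]
        simp
      · intro hne; exact absurd hca.symm hne
    · have hstrict := hconv (a j) (haA j hjK) (a (j - 1)) (haA (j - 1) (by omega)) hca
      rw [hkey] at hstrict
      exact ⟨hstrict.le, fun _ => hstrict⟩
  -- telescoping induction
  have main : ∀ l k : ℕ, l ≤ k → k ≤ K →
      ((G2 (a k) ⬝ᵥ (a k).2 - G (a k)) - (G2 (a l) ⬝ᵥ (a l).2 - G (a l))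
        ≤ Δt * ∑ j ∈ Finset.Icc (l + 1) k,
            (e j ⬝ᵥ f j - (a j).2 ⬝ᵥ (R (a j)).mulVec (a j).2)) ∧
      (a l ≠ a k →
        (G2 (a k) ⬝ᵥ (a k).2 - G (a k)) - (G2 (a l) ⬝ᵥ (a l).2 - G (a l))
        < Δt * ∑ j ∈ Finset.Icc (l + 1) k,
            (e j ⬝ᵥ f j - (a j).2 ⬝ᵥ (R (a j)).mulVec (a j).2)) := by
    intro l k hlk
    induction k, hlk using Nat.le_induction with
    | base =>
      intro _
      refine ⟨by simp, fun h => absurd rfl h⟩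
    | succ k hk ih =>
      intro hkK
      have ih' := ih (by omega)
      have hstep := step (k + 1) (by omega) hkK
      simp only [Nat.add_sub_cancel] at hstep
      have hsum : Δt * ∑ j ∈ Finset.Icc (l + 1) (k + 1),
            (e j ⬝ᵥ f j - (a j).2 ⬝ᵥ (R (a j)).mulVec (a j).2)
          = Δt * ∑ j ∈ Finset.Icc (l + 1) k,
              (e j ⬝ᵥ f j - (a j).2 ⬝ᵥ (R (a j)).mulVec (a j).2)
            + Δt * (e (k + 1) ⬝ᵥ f (k + 1)
              - (a (k + 1)).2 ⬝ᵥ (R (a (k + 1))).mulVec (a (k + 1)).2) := by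
        rw [Finset.sum_Icc_succ_top (by omega)]; ring
      constructor
      · rw [hsum]; linarith [ih'.1, hstep.1]
      · intro hne
        rw [hsum]
        by_cases hca : a k = a (k + 1)
        · have h1 : a l ≠ a k := fun h => hne (h.trans hca)
          linarith [ih'.2 h1, hstep.1]
        · linarith [ih'.1, hstep.2 hca]
  intro l k hlk hkK hne
  refine ⟨(main l k hlk.le hkK).2 hne, ?_⟩
  refine mul_le_mul_of_nonneg_left (Finset.sum_le_sum ?_) hΔt.le
  intro j hj
  have hjK : j ≤ K := le_trans (Finset.mem_Icc.mp hj).2 hkK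
  have hq : 0 ≤ (a j).2 ⬝ᵥ (R (a j)).mulVec (a j).2 := by
    have := (hR (a j) (haA j hjK)).dotProduct_mulVec_nonneg (a j).2
    simpa using this
  linarith
end
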